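/- Let α, β ∈ ℝ with β < α, let C ∈ ℂ with C ≠ 0, let M ≥ 0, R > 0, b ∈ ℝ, and let r : (R, ∞) × ℝ → ℂ satisfy |r(ρ, θ)| ≤ M ρ^β for all ρ > R and θ ∈ ℝ. Suppose that for all ρ > R and all θ ∈ ℝ: Im(C ρ^α e^{iαθ}) + Im r(ρ, θ) ≤ ρ |sin θ| + b. Then: (i) α ≤ 1; (ii) α ∉ (0, 1); (iii) if α = 1 then C is real with 0 < |C| ≤ 1. (These are the constraints on the leading asymptotic behavior of a dispersion relation obeying the improved causality criterion Im ω ≤ |Im k| + b for large complex k; in particular the conventional asymptotic causality criterion lim_{|k|→∞} |Re ω|/|k| ≤ 1 follows from the improved criterion.) -/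

import Mathlib

open Real Filter

private lemma key_aux (c A M b R β δ γ : ℝ) (hβ : β < γ) (hδ : δ < γ) (hγ : 0 < γ)
    (hR : 0 < R)
    (h : ∀ ρ : ℝ, R < ρ → c * ρ ^ γ ≤ A * ρ ^ δ + M * ρ ^ β + b) : c ≤ 0 := by
  have hlim : Tendsto (fun ρ : ℝ => A * ρ ^ (δ - γ) + M * ρ ^ (β - γ) + b * ρ ^ (-γ))
      atTop (nhds 0) := by
    have h1 := (tendsto_rpow_neg_atTop (by linarith : (0:ℝ) < γ - δ)).const_mul A
    have h2 := (tendsto_rpow_neg_atTop (by linarith : (0:ℝ) < γ - β)).const_mul M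
    have h3 := (tendsto_rpow_neg_atTop hγ).const_mul b
    rw [neg_sub] at h1 h2
    simpa using (h1.add h2).add h3
  refine ge_of_tendsto hlim ?_
  filter_upwards [eventually_gt_atTop (max R 1)] with ρ hρ
  have hρR : R < ρ := lt_of_le_of_lt (le_max_left _ _) hρ
  have hρ0 : (0:ℝ) < ρ := lt_trans hR hρR
  have hpos : (0:ℝ) < ρ ^ γ := Real.rpow_pos_of_pos hρ0 γ
  have key2 : c ≤ (A * ρ ^ δ + M * ρ ^ β + b) / ρ ^ γ := by
    rw [le_div_iff₀ hpos]; exact h ρ hρR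
  calc c ≤ (A * ρ ^ δ + M * ρ ^ β + b) / ρ ^ γ := key2
    _ = A * ρ ^ (δ - γ) + M * ρ ^ (β - γ) + b * ρ ^ (-γ) := by
        rw [Real.rpow_sub hρ0, Real.rpow_sub hρ0, Real.rpow_neg hρ0.le]
        field_simp

private lemma im_eq (C : ℂ) (hC : C ≠ 0) (x t : ℝ) :
    (C * (x:ℂ) * Complex.exp (Complex.I * t)).im
      = ‖C‖ * x * Real.sin (C.arg + t) := by
  have ha : (‖C‖) ≠ 0 := by simpa using hC
  have hre : ‖C‖ * Real.cos C.arg = C.re := by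
    rw [Complex.cos_arg hC]; field_simp
  have him : ‖C‖ * Real.sin C.arg = C.im := by
    rw [Complex.sin_arg]; field_simp
  rw [mul_comm Complex.I (t:ℂ), Complex.exp_mul_I, Real.sin_add]
  simp only [← Complex.ofReal_cos, ← Complex.ofReal_sin, Complex.mul_im, Complex.mul_re,
    Complex.ofReal_re, Complex.ofReal_im, Complex.add_re, Complex.add_im,
    Complex.I_re, Complex.I_im]
  linear_combination (-(x * Real.cos t)) * him + (-(x * Real.sin t)) * hre

/-- Constraints on the leading asymptotic behavior `ω = C k^α + O(|k|^β)`
of a dispersion relation obeying the improved causality criterion `Im ω ≤ |Im k| + b` for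
large complex `k = ρ e^{iθ}`.  If `β < α`, `C ≠ 0`, `|r(ρ,θ)| ≤ M ρ^β` for `ρ > R`, and
`Im(C ρ^α e^{iαθ}) + Im r(ρ,θ) ≤ ρ |sin θ| + b` for all `ρ > R`, `θ ∈ ℝ`, then:
(i) `α ≤ 1`; (ii) `α ∉ (0,1)`; (iii) if `α = 1` then `C` is real with `0 < |C| ≤ 1`. -/
theorem causal_leading_asymptotics (α β : ℝ) (hβα : β < α)
    (C : ℂ) (hC : C ≠ 0) (M R : ℝ) (hM : 0 ≤ M) (hR : 0 < R) (b : ℝ)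
    (r : ℝ → ℝ → ℂ)
    (hr : ∀ ρ θ : ℝ, R < ρ → ‖r ρ θ‖ ≤ M * ρ ^ β)
    (h : ∀ ρ θ : ℝ, R < ρ →
      (C * ((ρ ^ α : ℝ) : ℂ) * Complex.exp (Complex.I * α * θ)).im + (r ρ θ).im ≤
        ρ * |Real.sin θ| + b) :
    α ≤ 1 ∧ α ∉ Set.Ioo (0 : ℝ) 1 ∧
      (α = 1 → C.im = 0 ∧ 0 < ‖C‖ ∧ ‖C‖ ≤ 1) := by
  have haC : (0:ℝ) < ‖C‖ := by
    simpa [AbsoluteValue.pos_iff] using (norm_pos_iff.mpr hC)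
  -- Main derived inequality
  have H : ∀ ρ θ : ℝ, R < ρ →
      (‖C‖ * Real.sin (C.arg + α * θ)) * ρ ^ α
        ≤ |Real.sin θ| * ρ ^ (1:ℝ) + M * ρ ^ β + b := by
    intro ρ θ hρ
    have h1 := h ρ θ hρ
    have h2 := hr ρ θ hρ
    have h3 : -(M * ρ ^ β) ≤ (r ρ θ).im := by
      have := (abs_le.mp ((Complex.abs_im_le_norm (r ρ θ)).trans h2)).1
      linarith
    have h4 : (C * ((ρ ^ α : ℝ) : ℂ) * Complex.exp (Complex.I * α * θ)).im
        = ‖C‖ * (ρ ^ α) * Real.sin (C.arg + α * θ) := by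
      have e := im_eq C hC (ρ ^ α) (α * θ)
      rw [← e]
      congr 2
      push_cast
      ring
    rw [h4] at h1
    rw [Real.rpow_one]
    nlinarith [h1, h3]
  have him : ‖C‖ * Real.sin C.arg = C.im := by
    rw [Complex.sin_arg]; field_simp
  -- (i) α ≤ 1
  have part1 : α ≤ 1 := by
    by_contra hgt
    push_neg at hgt
    have hα0 : α ≠ 0 := by linarith
    set θ0 : ℝ := (π / 2 - C.arg) / α with hθ0
    have hsin : Real.sin (C.arg + α * θ0) = 1 := by
      rw [show C.arg + α * θ0 = π / 2 by rw [hθ0]; field_simp; ring]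
      exact Real.sin_pi_div_two
    have happ : ∀ ρ : ℝ, R < ρ → ‖C‖ * ρ ^ α ≤ 1 * ρ ^ (1:ℝ) + M * ρ ^ β + b := by
      intro ρ hρ
      have h1 := H ρ θ0 hρ
      rw [hsin, mul_one] at h1
      have hρ1 : (0:ℝ) ≤ ρ ^ (1:ℝ) := Real.rpow_nonneg (by linarith) _
      have hb : |Real.sin θ0| * ρ ^ (1:ℝ) ≤ 1 * ρ ^ (1:ℝ) :=
        mul_le_mul_of_nonneg_right (abs_le.mpr ⟨by linarith [Real.neg_one_le_sin θ0],
          Real.sin_le_one θ0⟩) hρ1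
      linarith
    have := key_aux (‖C‖) 1 M b R β 1 α hβα hgt (by linarith) hR happ
    linarith
  -- (ii) α ∉ (0,1)
  have part2 : α ∉ Set.Ioo (0:ℝ) 1 := by
    rintro ⟨h0, h1⟩
    set s : ℝ := α * π with hs
    have hs0 : 0 < s := mul_pos h0 Real.pi_pos
    have hsπ : s < π := by nlinarith [Real.pi_pos]
    set k : ℤ := ⌊-C.arg / s⌋ + 1 with hk
    set t : ℝ := C.arg + k * s with ht
    have ht0 : 0 < t := by
      have h5 : -C.arg / s < (k:ℝ) := by
        rw [hk]; push_cast; exact Int.lt_floor_add_one _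
      have := (div_lt_iff₀ hs0).mp h5
      rw [ht]; linarith
    have htπ : t < π := by
      have h5 : ((⌊-C.arg / s⌋ : ℝ)) ≤ -C.arg / s := Int.floor_le _
      have h6 : (k:ℝ) ≤ -C.arg / s + 1 := by rw [hk]; push_cast; linarith
      have h7 : (k:ℝ) * s ≤ (-C.arg / s + 1) * s := mul_le_mul_of_nonneg_right h6 hs0.le
      have h8 : (-C.arg / s + 1) * s = -C.arg + s := by field_simp
      rw [ht]; rw [h8] at h7; linarith
    have hsin : 0 < Real.sin t := Real.sin_pos_of_pos_of_lt_pi ht0 htπ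
    set θ : ℝ := (k:ℝ) * π with hθ
    have hθsin : Real.sin θ = 0 := Real.sin_int_mul_pi k
    have hteq : C.arg + α * θ = t := by rw [ht, hθ, hs]; ring
    have happ : ∀ ρ : ℝ, R < ρ →
        (‖C‖ * Real.sin t) * ρ ^ α ≤ 0 * ρ ^ β + M * ρ ^ β + b := by
      intro ρ hρ
      have h5 := H ρ θ hρ
      rw [hteq, hθsin] at h5
      simpa using h5
    have hc := key_aux (‖C‖ * Real.sin t) 0 M b R β β α hβα hβα h0 hR happ
    nlinarith
  -- (iii)
  refine ⟨part1, part2, ?_⟩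
  intro hα1
  subst hα1
  have himle : C.im ≤ 0 := by
    have happ : ∀ ρ : ℝ, R < ρ → C.im * ρ ^ (1:ℝ) ≤ 0 * ρ ^ β + M * ρ ^ β + b := by
      intro ρ hρ
      have h5 := H ρ 0 hρ
      simp only [mul_zero, add_zero, Real.sin_zero, abs_zero, zero_mul, zero_add] at h5
      rw [him] at h5
      linarith
    exact key_aux C.im 0 M b R β β 1 hβα hβα one_pos hR happ
  have himge : 0 ≤ C.im := by
    have happ : ∀ ρ : ℝ, R < ρ → (-C.im) * ρ ^ (1:ℝ) ≤ 0 * ρ ^ β + M * ρ ^ β + b := by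
      intro ρ hρ
      have h5 := H ρ π hρ
      rw [show C.arg + 1 * π = C.arg + π by ring, Real.sin_add_pi, Real.sin_pi] at h5
      simp only [abs_zero, zero_mul, zero_add] at h5
      rw [show ‖C‖ * -Real.sin C.arg = -C.im by rw [← him]; ring] at h5
      simp only [zero_mul, zero_add]
      linarith
    have := key_aux (-C.im) 0 M b R β β 1 hβα hβα one_pos hR happ
    linarith
  have habs : ‖C‖ ≤ 1 := by
    have hsin : Real.sin (C.arg + 1 * (π / 2 - C.arg)) = 1 := by
      rw [show C.arg + 1 * (π / 2 - C.arg) = π / 2 by ring]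
      exact Real.sin_pi_div_two
    have happ : ∀ ρ : ℝ, R < ρ →
        (‖C‖ - 1) * ρ ^ (1:ℝ) ≤ 0 * ρ ^ β + M * ρ ^ β + b := by
      intro ρ hρ
      have h5 := H ρ (π / 2 - C.arg) hρ
      rw [hsin, mul_one] at h5
      have hρ1 : (0:ℝ) ≤ ρ ^ (1:ℝ) := Real.rpow_nonneg (by linarith) _
      have hb : |Real.sin (π / 2 - C.arg)| * ρ ^ (1:ℝ) ≤ 1 * ρ ^ (1:ℝ) :=
        mul_le_mul_of_nonneg_right (abs_le.mpr ⟨by linarith [Real.neg_one_le_sin (π / 2 - C.arg)],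
          Real.sin_le_one _⟩) hρ1
      nlinarith
    have := key_aux (‖C‖ - 1) 0 M b R β β 1 hβα hβα one_pos hR happ
    linarith
  exact ⟨le_antisymm himle himge, haC, habs⟩
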